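/- Let C be a coaugmented differential graded coalgebra, A an augmented differential graded algebra, and τ: C → A a homogeneous degree -1 map. Suppose τ satisfies the twisting cochain conditions D(τ) = τ ∪ τ, τ∘η = 0, ε∘τ = 0. Let M be a differential graded right C-comodule and N a differential graded left A-module. Then the operator d_τ = d - (τ ∩ ·) on M⊗N squares to zero, i.e., d_τ ∘ d_τ = 0, so M ⊗_τ N := (M⊗N, d_τ) is a chain complex. -/

import Mathlib

open scoped TensorProduct DirectSum

noncomputable section
namespace HPT

/-- The sign `(-1)^k` for an integer `k`. -/
def sgn (k : ℤ) : ℤ := (-1) ^ k.natAbs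

variable {R : Type} [CommRing R]

section Graded

variable {M : Type} [AddCommGroup M] [Module R M]
variable {N : Type} [AddCommGroup N] [Module R N]

/-- `f : M → N` is homogeneous of degree `r` with respect to the gradings `ℳ`, `𝒩`. -/
def IsDeg (ℳ : ℤ → Submodule R M) (𝒩 : ℤ → Submodule R N) (r : ℤ) (f : M →ₗ[R] N) : Prop :=
  ∀ i : ℤ, ∀ x ∈ ℳ i, f x ∈ 𝒩 (i + r)

/-- The image of `p ⊗ q` inside `M ⊗ N`. -/
def tmul' (p : Submodule R M) (q : Submodule R N) : Submodule R (M ⊗[R] N) :=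
  LinearMap.range (TensorProduct.map p.subtype q.subtype)

/-- The sign operator multiplying a homogeneous element of degree `i` by `(-1)^(k*i)`;
used to implement the Eilenberg-Koszul sign convention. -/
def sgnOp (ℳ : ℤ → Submodule R M) [DirectSum.Decomposition ℳ] (k : ℤ) : M →ₗ[R] M :=
  (DirectSum.decomposeLinearEquiv ℳ).symm.toLinearMap ∘ₗ
    (DirectSum.toModule R ℤ (⨁ i, ↥(ℳ i)) fun i =>
      sgn (k * i) • DirectSum.lof R ℤ (fun j => ↥(ℳ j)) i) ∘ₗ
    (DirectSum.decomposeLinearEquiv ℳ).toLinearMap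

/-- The Hom-complex differential `D(f) = d_N ∘ f - (-1)^{|f|} f ∘ d_M` for `f` of degree `r`. -/
def DhGen (dM : M →ₗ[R] M) (dN : N →ₗ[R] N) (r : ℤ) (f : M →ₗ[R] N) : M →ₗ[R] N :=
  dN ∘ₗ f - sgn r • (f ∘ₗ dM)

/-- The cup pairing `f ∪ g = μ ∘ (f ⊗ g) ∘ Δ_M`, with the Koszul sign `(-1)^{|g| |m'|}`
implemented by the sign operator `σ` (to be taken to be `sgnOp ℳ |g|`). -/
def cupGen {C B : Type} [AddCommGroup C] [Module R C] [AddCommGroup B] [Module R B]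
    (ΔM : M →ₗ[R] M ⊗[R] C) (μ : N ⊗[R] B →ₗ[R] N) (σ : M →ₗ[R] M)
    (f : M →ₗ[R] N) (g : C →ₗ[R] B) : M →ₗ[R] N :=
  μ ∘ₗ TensorProduct.map f g ∘ₗ LinearMap.rTensor C σ ∘ₗ ΔM

/-- The cap operator `φ ∩ ·` on `M ⊗ N`, where `M` carries a comodule structure map
`ΔM : M → M ⊗ C` and `N` a module structure map `μ : A ⊗ N → N`; `k` is the degree of `φ`. -/
def cap {C A' : Type} [AddCommGroup C] [Module R C] [AddCommGroup A'] [Module R A']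
    (𝓜 : ℤ → Submodule R M) [DirectSum.Decomposition 𝓜]
    (ΔM : M →ₗ[R] M ⊗[R] C) (μ : A' ⊗[R] N →ₗ[R] N) (k : ℤ) (φ : C →ₗ[R] A') :
    M ⊗[R] N →ₗ[R] M ⊗[R] N :=
  LinearMap.lTensor M (μ ∘ₗ LinearMap.rTensor N φ) ∘ₗ
    (TensorProduct.assoc R M C N).toLinearMap ∘ₗ
    LinearMap.rTensor N (LinearMap.rTensor C (sgnOp 𝓜 k) ∘ₗ ΔM)

/-- The tensor-product differential `d ⊗ 1 + (-1)^{|m|} 1 ⊗ d` on `M ⊗ N`. -/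
def dTens (𝓜 : ℤ → Submodule R M) [DirectSum.Decomposition 𝓜]
    (dM : M →ₗ[R] M) (dN : N →ₗ[R] N) : M ⊗[R] N →ₗ[R] M ⊗[R] N :=
  LinearMap.rTensor N dM + LinearMap.lTensor M dN ∘ₗ LinearMap.rTensor N (sgnOp 𝓜 1)

end Graded

section Coalg

variable {C : Type} [AddCommGroup C] [Module R C]

/-- Differential graded coalgebra structure data (internally ℤ-graded). -/
structure IsDGCoalg (𝒞 : ℤ → Submodule R C) [DirectSum.Decomposition 𝒞]
    (Δ : C →ₗ[R] C ⊗[R] C) (εC : C →ₗ[R] R) (dC : C →ₗ[R] C) : Prop where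
  coassoc : (TensorProduct.assoc R C C C).toLinearMap ∘ₗ LinearMap.rTensor C Δ ∘ₗ Δ
      = LinearMap.lTensor C Δ ∘ₗ Δ
  counit_left : (TensorProduct.lid R C).toLinearMap ∘ₗ LinearMap.rTensor C εC ∘ₗ Δ
      = LinearMap.id
  counit_right : (TensorProduct.rid R C).toLinearMap ∘ₗ LinearMap.lTensor C εC ∘ₗ Δ
      = LinearMap.id
  comul_deg : ∀ n : ℤ, ∀ x ∈ 𝒞 n, Δ x ∈ ⨆ p : ℤ, tmul' (𝒞 p) (𝒞 (n - p))
  d_deg : IsDeg 𝒞 𝒞 (-1) dC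
  d_sq : dC ∘ₗ dC = 0
  comul_chain : Δ ∘ₗ dC =
      (LinearMap.rTensor C dC + LinearMap.lTensor C dC ∘ₗ LinearMap.rTensor C (sgnOp 𝒞 1)) ∘ₗ Δ
  counit_deg : ∀ i : ℤ, i ≠ 0 → ∀ x ∈ 𝒞 i, εC x = 0
  counit_chain : εC ∘ₗ dC = 0

/-- Coaugmentation data for a dg coalgebra: a grouplike cycle `e` of degree 0. -/
structure IsCoaug (Δ : C →ₗ[R] C ⊗[R] C) (εC : C →ₗ[R] R) (dC : C →ₗ[R] C)
    (𝒞 : ℤ → Submodule R C) (e : C) : Prop where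
  mem : e ∈ 𝒞 0
  counit : εC e = 1
  diag : Δ e = e ⊗ₜ[R] e
  d : dC e = 0

end Coalg

section Alg

variable {A : Type} [Ring A] [Algebra R A]

/-- Differential graded algebra structure (internally graded, multiplication of `A`). -/
structure IsDGAlg (𝒜 : ℤ → Submodule R A) (dA : A →ₗ[R] A) : Prop where
  d_deg : IsDeg 𝒜 𝒜 (-1) dA
  d_sq : dA ∘ₗ dA = 0
  leibniz : ∀ i : ℤ, ∀ x ∈ 𝒜 i, ∀ y : A, dA (x * y) = dA x * y + sgn i • (x * dA y)
  d_one : dA 1 = 0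

/-- Augmentation for a dg algebra. -/
structure IsAug (𝒜 : ℤ → Submodule R A) (dA : A →ₗ[R] A) (εA : A →ₐ[R] R) : Prop where
  vanish : ∀ i : ℤ, i ≠ 0 → ∀ x ∈ 𝒜 i, εA x = 0
  chain : ∀ x : A, εA (dA x) = 0

end Alg

section Conv

variable {C : Type} [AddCommGroup C] [Module R C]
variable {A : Type} [Ring A] [Algebra R A]

/-- The cup (convolution) product on `Hom(C, A)`; `s` is the degree of `g`. -/
def cup (𝒞 : ℤ → Submodule R C) [DirectSum.Decomposition 𝒞] (Δ : C →ₗ[R] C ⊗[R] C)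
    (s : ℤ) (f g : C →ₗ[R] A) : C →ₗ[R] A :=
  cupGen Δ (LinearMap.mul' R A) (sgnOp 𝒞 s) f g

/-- The convolution unit `η ∘ ε : C → A`. -/
def convOne (A : Type) [Ring A] [Algebra R A] (εC : C →ₗ[R] R) : C →ₗ[R] A :=
  Algebra.linearMap R A ∘ₗ εC

variable (𝒞 : ℤ → Submodule R C) [DirectSum.Decomposition 𝒞]

/-- `τ : C → A` is a twisting cochain. -/
structure IsTwisting (Δ : C →ₗ[R] C ⊗[R] C) (εC : C →ₗ[R] R) (dC : C →ₗ[R] C) (e : C)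
    (𝒜 : ℤ → Submodule R A) (dA : A →ₗ[R] A) (εA : A →ₐ[R] R) (τ : C →ₗ[R] A) : Prop where
  deg : IsDeg 𝒞 𝒜 (-1) τ
  eq : DhGen dC dA (-1) τ = cup 𝒞 Δ (-1) τ τ
  unit : τ e = 0
  counit : εA.toLinearMap ∘ₗ τ = 0

/-- `ψ` is a homotopy of twisting cochains from `τ₁` to `τ₂`. -/
structure IsTCHomotopy (Δ : C →ₗ[R] C ⊗[R] C) (εC : C →ₗ[R] R) (dC : C →ₗ[R] C) (e : C)
    (𝒜 : ℤ → Submodule R A) (dA : A →ₗ[R] A) (εA : A →ₐ[R] R)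
    (τ₁ τ₂ ψ : C →ₗ[R] A) : Prop where
  deg : IsDeg 𝒞 𝒜 0 ψ
  eq : DhGen dC dA 0 ψ = cup 𝒞 Δ 0 τ₁ ψ - cup 𝒞 Δ (-1) ψ τ₂
  unit : ψ e = 1
  counit : εA.toLinearMap ∘ₗ ψ = εC

end Conv

section Mod

variable {A : Type} [Ring A] [Algebra R A]
variable {N : Type} [AddCommGroup N] [Module R N]

/-- Differential graded left module over a dg algebra. -/
structure IsDGModLeft (𝒜 : ℤ → Submodule R A) (dA : A →ₗ[R] A)
    (𝒩 : ℤ → Submodule R N) (dN : N →ₗ[R] N) (μ : A ⊗[R] N →ₗ[R] N) : Prop where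
  one_act : ∀ x : N, μ (1 ⊗ₜ x) = x
  mul_act : ∀ (a b : A) (x : N), μ ((a * b) ⊗ₜ x) = μ (a ⊗ₜ μ (b ⊗ₜ x))
  act_deg : ∀ i j : ℤ, ∀ a ∈ 𝒜 i, ∀ x ∈ 𝒩 j, μ (a ⊗ₜ x) ∈ 𝒩 (i + j)
  d_deg : IsDeg 𝒩 𝒩 (-1) dN
  d_sq : dN ∘ₗ dN = 0
  chain : ∀ i : ℤ, ∀ a ∈ 𝒜 i, ∀ x : N,
    dN (μ (a ⊗ₜ x)) = μ (dA a ⊗ₜ x) + sgn i • μ (a ⊗ₜ dN x)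

/-- Differential graded right module over a dg algebra. -/
structure IsDGModRight (𝒜 : ℤ → Submodule R A) (dA : A →ₗ[R] A)
    (𝒩 : ℤ → Submodule R N) (dN : N →ₗ[R] N) (μ : N ⊗[R] A →ₗ[R] N) : Prop where
  one_act : ∀ x : N, μ (x ⊗ₜ 1) = x
  mul_act : ∀ (x : N) (a b : A), μ (x ⊗ₜ (a * b)) = μ (μ (x ⊗ₜ a) ⊗ₜ b)
  act_deg : ∀ i j : ℤ, ∀ x ∈ 𝒩 i, ∀ a ∈ 𝒜 j, μ (x ⊗ₜ a) ∈ 𝒩 (i + j)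
  d_deg : IsDeg 𝒩 𝒩 (-1) dN
  d_sq : dN ∘ₗ dN = 0
  chain : ∀ i j : ℤ, ∀ x ∈ 𝒩 i, ∀ a ∈ 𝒜 j,
    dN (μ (x ⊗ₜ a)) = μ (dN x ⊗ₜ a) + sgn i • μ (x ⊗ₜ dA a)

variable {C : Type} [AddCommGroup C] [Module R C]
variable {M : Type} [AddCommGroup M] [Module R M]

/-- Differential graded comodule over a dg coalgebra, with structure map `M → M ⊗ C`. -/
structure IsDGComod (𝒞 : ℤ → Submodule R C) (Δ : C →ₗ[R] C ⊗[R] C)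
    (εC : C →ₗ[R] R) (dC : C →ₗ[R] C)
    (𝓜 : ℤ → Submodule R M) [DirectSum.Decomposition 𝓜] (dM : M →ₗ[R] M)
    (ΔM : M →ₗ[R] M ⊗[R] C) : Prop where
  coassoc : (TensorProduct.assoc R M C C).toLinearMap ∘ₗ LinearMap.rTensor C ΔM ∘ₗ ΔM
      = LinearMap.lTensor M Δ ∘ₗ ΔM
  counit : (TensorProduct.rid R M).toLinearMap ∘ₗ LinearMap.lTensor M εC ∘ₗ ΔM = LinearMap.id
  deg : ∀ n : ℤ, ∀ x ∈ 𝓜 n, ΔM x ∈ ⨆ p : ℤ, tmul' (𝓜 p) (𝒞 (n - p))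
  d_deg : IsDeg 𝓜 𝓜 (-1) dM
  d_sq : dM ∘ₗ dM = 0
  chain : ΔM ∘ₗ dM =
    (LinearMap.rTensor C dM + LinearMap.lTensor M dC ∘ₗ LinearMap.rTensor C (sgnOp 𝓜 1)) ∘ₗ ΔM

end Mod

section Cocomplete

variable {C : Type} [AddCommGroup C] [Module R C]

/-- Iterated tensor powers of `C`. -/
def iTensM (R C : Type) [CommRing R] [AddCommGroup C] [Module R C] : ℕ → ModuleCat R
  | 0 => ModuleCat.of R C
  | n + 1 => ModuleCat.of R ((iTensM R C n) ⊗[R] C)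

/-- The reduced projection `id - η ∘ ε` associated to a coaugmentation. -/
def redProj (εC : C →ₗ[R] R) (e : C) : C →ₗ[R] C :=
  LinearMap.id - LinearMap.toSpanSingleton R C e ∘ₗ εC

/-- The reduced iterated comultiplication `C → (JC)^{⊗(n+1)}`. -/
def redIter (Δ : C →ₗ[R] C ⊗[R] C) (π' : C →ₗ[R] C) : (n : ℕ) → (C →ₗ[R] iTensM R C n)
  | 0 => π'
  | n + 1 => TensorProduct.map (redIter Δ π' n) π' ∘ₗ Δ

/-- The coaugmentation filtration `F_n C = ker (C → (JC)^{⊗(n+1)})`. -/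
def coaugFil (Δ : C →ₗ[R] C ⊗[R] C) (εC : C →ₗ[R] R) (e : C) (n : ℕ) : Submodule R C :=
  LinearMap.ker (redIter Δ (redProj εC e) n)

/-- The coaugmented coalgebra `C` is cocomplete: it is the union of the coaugmentation
filtration. -/
def Cocomplete (Δ : C →ₗ[R] C ⊗[R] C) (εC : C →ₗ[R] R) (e : C) : Prop :=
  ∀ x : C, ∃ n : ℕ, x ∈ coaugFil Δ εC e n

end Cocomplete

end HPT

namespace HPT
set_option synthInstance.maxHeartbeats 400000

section Aux1
variable {R : Type} [CommRing R]
variable {M : Type} [AddCommGroup M] [Module R M]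
variable {N : Type} [AddCommGroup N] [Module R N]

lemma sgn_eq_ite (k : ℤ) : sgn k = if Even k then 1 else -1 := by
  unfold sgn
  rcases Int.even_or_odd k with h | h
  · rw [if_pos h, Even.neg_one_pow (Int.natAbs_even.mpr h)]
  · rw [if_neg (Int.not_even_iff_odd.mpr h), Odd.neg_one_pow (Int.natAbs_odd.mpr h)]

lemma sgn_mul_sgn (a b : ℤ) : sgn a * sgn b = sgn (a + b) := by
  rw [sgn_eq_ite, sgn_eq_ite, sgn_eq_ite]
  rcases Int.even_or_odd a with ha | ha <;> rcases Int.even_or_odd b with hb | hb <;>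
    simp [ha, hb, Int.even_add, Int.not_even_iff_odd.mpr, Int.not_even_iff_odd]

lemma sgn_neg' (a : ℤ) : sgn (-a) = sgn a := by unfold sgn; rw [Int.natAbs_neg]

@[simp] lemma sgn_neg_one_mul (a : ℤ) : sgn (-1 * a) = sgn a := by
  rw [neg_one_mul, sgn_neg']
@[simp] lemma sgn_one_mul (a : ℤ) : sgn (1 * a) = sgn a := by rw [one_mul]

lemma sgn_sq (a : ℤ) : sgn a * sgn a = 1 := by rw [sgn_eq_ite]; split <;> ring

lemma sgn_sub_one (a : ℤ) : sgn (a - 1) = -sgn a := by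
  have h := sgn_mul_sgn (a - 1) 1
  simp only [sub_add_cancel] at h
  have h1 : sgn 1 = -1 := rfl
  rw [h1] at h; linarith

lemma sgn_parity (a b : ℤ) (h : Even (a - b)) : sgn a = sgn b := by
  rw [sgn_eq_ite, sgn_eq_ite]
  have : Even a ↔ Even b := by
    rw [Int.even_iff] at h; rw [Int.even_iff, Int.even_iff]; omega
  simp [this]

lemma sgnOp_apply (ℳ : ℤ → Submodule R M) [DirectSum.Decomposition ℳ] (k i : ℤ)
    (x : M) (hx : x ∈ ℳ i) : sgnOp ℳ k x = sgn (k * i) • x := by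
  unfold sgnOp
  simp only [LinearMap.comp_apply, LinearEquiv.coe_coe, DirectSum.decomposeLinearEquiv_apply,
    DirectSum.decompose_of_mem ℳ hx]
  rw [show (DirectSum.of (fun j => ↥(ℳ j)) i) ⟨x, hx⟩
      = DirectSum.lof R ℤ (fun j => ↥(ℳ j)) i ⟨x, hx⟩ from rfl, DirectSum.toModule_lof]
  rw [LinearMap.smul_apply, map_zsmul]
  simp only [DirectSum.decomposeLinearEquiv_symm_apply]
  rw [show (DirectSum.lof R ℤ (fun j => ↥(ℳ j)) i) ⟨x, hx⟩
      = DirectSum.of (fun j => ↥(ℳ j)) i ⟨x, hx⟩ from rfl, DirectSum.decompose_symm_of]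

lemma ext_homog (𝓜 : ℤ → Submodule R M) [DirectSum.Decomposition 𝓜]
    {P : Type} [AddCommGroup P] [Module R P] {f g : M ⊗[R] N →ₗ[R] P}
    (h : ∀ (i : ℤ) (m : M), m ∈ 𝓜 i → ∀ n : N, f (m ⊗ₜ n) = g (m ⊗ₜ n)) : f = g := by
  apply TensorProduct.ext'
  intro m n
  have hm : m ∈ ⨆ i, 𝓜 i := by
    rw [(DirectSum.Decomposition.isInternal 𝓜).submodule_iSup_eq_top]; trivial
  refine Submodule.iSup_induction (motive := fun m => f (m ⊗ₜ n) = g (m ⊗ₜ n)) _ hm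
    (fun i x hx => h i x hx n) (by simp) ?_
  intro x y hx hy
  rw [TensorProduct.add_tmul, map_add, map_add, hx, hy]

lemma tmul'_iSup_induction (p : ℤ → Submodule R M) (q : ℤ → Submodule R N)
    {P : M ⊗[R] N → Prop}
    (htmul : ∀ (k : ℤ) (m : M), m ∈ p k → ∀ (c : N), c ∈ q k → P (m ⊗ₜ c))
    (h0 : P 0) (hadd : ∀ x y, P x → P y → P (x + y)) :
    ∀ z ∈ ⨆ k, tmul' (p k) (q k), P z := by
  intro z hz
  refine Submodule.iSup_induction (motive := P) _ hz ?_ h0 hadd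
  rintro k x ⟨y, rfl⟩
  induction y using TensorProduct.induction_on with
  | zero => simpa using h0
  | tmul a b => simpa using htmul k a a.2 b b.2
  | add a b ha hb => rw [map_add]; exact hadd _ _ ha hb

lemma sign_swap {C : Type} [AddCommGroup C] [Module R C]
    (𝓜 : ℤ → Submodule R M) [DirectSum.Decomposition 𝓜]
    (𝒞 : ℤ → Submodule R C) [DirectSum.Decomposition 𝒞]
    (j : ℤ) {z : M ⊗[R] C} (hz : z ∈ ⨆ p : ℤ, tmul' (𝓜 p) (𝒞 (j - p))) :
    LinearMap.rTensor C (sgnOp 𝓜 (-1)) z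
      = sgn j • LinearMap.lTensor M (sgnOp 𝒞 (-1)) z := by
  refine tmul'_iSup_induction 𝓜 (fun p => 𝒞 (j - p))
    (P := fun z => LinearMap.rTensor C (sgnOp 𝓜 (-1)) z
      = sgn j • LinearMap.lTensor M (sgnOp 𝒞 (-1)) z) ?_ (by simp) ?_ z hz
  · intro p m hm c hc
    rw [LinearMap.rTensor_tmul, LinearMap.lTensor_tmul,
      sgnOp_apply 𝓜 (-1) p m hm, sgnOp_apply 𝒞 (-1) (j - p) c hc]
    rw [sgn_neg_one_mul, sgn_neg_one_mul, TensorProduct.tmul_smul, smul_smul,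
      ← TensorProduct.smul_tmul']
    congr 1
    rw [sgn_mul_sgn]
    refine sgn_parity _ _ ?_
    have h2 : p - (j + (j - p)) = 2 * (p - j) := by ring
    rw [h2]
    exact even_two_mul _
  · intro x y hx hy
    rw [map_add, map_add, smul_add, hx, hy]

end Aux1

section Aux2
variable {R : Type} [CommRing R]
variable {C : Type} [AddCommGroup C] [Module R C]
variable {A : Type} [Ring A] [Algebra R A]
variable {M : Type} [AddCommGroup M] [Module R M]
variable {N : Type} [AddCommGroup N] [Module R N]

/-- `capAux μN τ n w = (1 ⊗ μ(τ ⊗ 1))(assoc(w ⊗ n))`. -/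
def capAux (μN : A ⊗[R] N →ₗ[R] N) (τ : C →ₗ[R] A) (n : N) :
    M ⊗[R] C →ₗ[R] M ⊗[R] N :=
  LinearMap.lTensor M (μN ∘ₗ LinearMap.rTensor N τ) ∘ₗ
    (TensorProduct.assoc R M C N).toLinearMap ∘ₗ
    (TensorProduct.mk R (M ⊗[R] C) N).flip n

@[simp] lemma capAux_tmul (μN : A ⊗[R] N →ₗ[R] N) (τ : C →ₗ[R] A) (n : N)
    (m : M) (c : C) : capAux μN τ n (m ⊗ₜ c) = m ⊗ₜ μN (τ c ⊗ₜ n) := by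
  simp [capAux, TensorProduct.assoc_tmul]

lemma cap_apply_tmul (𝓜 : ℤ → Submodule R M) [DirectSum.Decomposition 𝓜]
    (ΔM : M →ₗ[R] M ⊗[R] C) (μN : A ⊗[R] N →ₗ[R] N) (k : ℤ) (τ : C →ₗ[R] A)
    (m : M) (n : N) :
    cap 𝓜 ΔM μN k τ (m ⊗ₜ n)
      = capAux μN τ n (LinearMap.rTensor C (sgnOp 𝓜 k) (ΔM m)) := by
  simp [cap, capAux, LinearMap.rTensor_tmul]

/-- sign-free cap operator. -/
def cap0 (ΔM : M →ₗ[R] M ⊗[R] C) (μN : A ⊗[R] N →ₗ[R] N) (φ : C →ₗ[R] A) :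
    M ⊗[R] N →ₗ[R] M ⊗[R] N :=
  LinearMap.lTensor M (μN ∘ₗ LinearMap.rTensor N φ) ∘ₗ
    (TensorProduct.assoc R M C N).toLinearMap ∘ₗ LinearMap.rTensor N ΔM

lemma cap0_apply_tmul (ΔM : M →ₗ[R] M ⊗[R] C) (μN : A ⊗[R] N →ₗ[R] N)
    (φ : C →ₗ[R] A) (m : M) (n : N) :
    cap0 ΔM μN φ (m ⊗ₜ n) = capAux μN φ n (ΔM m) := by
  simp [cap0, capAux]

lemma dTens_tmul (𝓜 : ℤ → Submodule R M) [DirectSum.Decomposition 𝓜]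
    (dM : M →ₗ[R] M) (dN : N →ₗ[R] N) (i : ℤ) (m : M) (hm : m ∈ 𝓜 i) (n : N) :
    dTens 𝓜 dM dN (m ⊗ₜ n) = dM m ⊗ₜ n + sgn i • (m ⊗ₜ dN n) := by
  simp only [dTens, LinearMap.add_apply, LinearMap.comp_apply, LinearMap.rTensor_tmul,
    sgnOp_apply 𝓜 1 i m hm, sgn_one_mul]
  rw [TensorProduct.smul_tmul', LinearMap.lTensor_tmul, ← TensorProduct.smul_tmul']

end Aux2

section Aux3
variable {R : Type} [CommRing R]
variable {C : Type} [AddCommGroup C] [Module R C]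
variable {A : Type} [Ring A] [Algebra R A]
variable {M : Type} [AddCommGroup M] [Module R M]
variable {N : Type} [AddCommGroup N] [Module R N]

lemma dTens_sq (𝓜 : ℤ → Submodule R M) [DirectSum.Decomposition 𝓜]
    (dM : M →ₗ[R] M) (dN : N →ₗ[R] N)
    (hMdeg : IsDeg 𝓜 𝓜 (-1) dM) (hM2 : dM ∘ₗ dM = 0) (hN2 : dN ∘ₗ dN = 0) :
    dTens 𝓜 dM dN ∘ₗ dTens 𝓜 dM dN = 0 := by
  refine ext_homog 𝓜 ?_
  intro i m hm n
  have h1 : dM (dM m) = 0 := by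
    have := LinearMap.ext_iff.mp hM2 m; simpa using this
  have h2 : dN (dN n) = 0 := by
    have := LinearMap.ext_iff.mp hN2 n; simpa using this
  have hdm : dM m ∈ 𝓜 (i + -1) := hMdeg i m hm
  rw [LinearMap.comp_apply, dTens_tmul 𝓜 dM dN i m hm n, map_add, map_zsmul,
    dTens_tmul 𝓜 dM dN (i + -1) (dM m) hdm n,
    dTens_tmul 𝓜 dM dN i m hm (dN n), h1, h2]
  have h3 : sgn (i + -1) = -sgn i := by
    rw [show i + -1 = i - 1 by ring, sgn_sub_one]
  rw [h3]
  simp only [TensorProduct.zero_tmul, TensorProduct.tmul_zero, smul_zero, add_zero, zero_add,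
    smul_add, neg_smul, LinearMap.zero_apply]
  abel

end Aux3

section Aux4
variable {R : Type} [CommRing R]
variable {C : Type} [AddCommGroup C] [Module R C]
variable {A : Type} [Ring A] [Algebra R A]
variable {M : Type} [AddCommGroup M] [Module R M]
variable {N : Type} [AddCommGroup N] [Module R N]

/-- the two-step cap composite, signs on the middle tensor factor. -/
def Gmap (μN : A ⊗[R] N →ₗ[R] N) (τ : C →ₗ[R] A) (σC : C →ₗ[R] C) (n : N) :
    (M ⊗[R] C) ⊗[R] C →ₗ[R] M ⊗[R] N :=
  LinearMap.lTensor M (μN ∘ₗ LinearMap.rTensor N τ) ∘ₗ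
  (TensorProduct.assoc R M C N).toLinearMap ∘ₗ
  LinearMap.lTensor (M ⊗[R] C) (μN ∘ₗ LinearMap.rTensor N τ) ∘ₗ
  (TensorProduct.assoc R (M ⊗[R] C) C N).toLinearMap ∘ₗ
  (TensorProduct.mk R ((M ⊗[R] C) ⊗[R] C) N).flip n ∘ₗ
  LinearMap.rTensor C (LinearMap.lTensor M σC)

@[simp] lemma Gmap_tmul (μN : A ⊗[R] N →ₗ[R] N) (τ : C →ₗ[R] A) (σC : C →ₗ[R] C)
    (n : N) (m : M) (c' c : C) :
    Gmap μN τ σC n ((m ⊗ₜ c') ⊗ₜ c) = m ⊗ₜ μN (τ (σC c') ⊗ₜ μN (τ c ⊗ₜ n)) := by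
  simp [Gmap, TensorProduct.assoc_tmul]

/-- cap with a composite coefficient, via comultiplication on the C side. -/
def Bmap (μN : A ⊗[R] N →ₗ[R] N) (τ : C →ₗ[R] A) (σC : C →ₗ[R] C) (n : N) :
    M ⊗[R] (C ⊗[R] C) →ₗ[R] M ⊗[R] N :=
  LinearMap.lTensor M (μN ∘ₗ LinearMap.rTensor N
      (LinearMap.mul' R A ∘ₗ TensorProduct.map τ τ ∘ₗ LinearMap.rTensor C σC)) ∘ₗ
  (TensorProduct.assoc R M (C ⊗[R] C) N).toLinearMap ∘ₗ
  (TensorProduct.mk R (M ⊗[R] (C ⊗[R] C)) N).flip n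

@[simp] lemma Bmap_tmul (μN : A ⊗[R] N →ₗ[R] N) (τ : C →ₗ[R] A) (σC : C →ₗ[R] C)
    (n : N) (m : M) (c' c : C) :
    Bmap μN τ σC n (m ⊗ₜ (c' ⊗ₜ c)) = m ⊗ₜ μN ((τ (σC c') * τ c) ⊗ₜ n) := by
  simp [Bmap, TensorProduct.assoc_tmul]

lemma cap_sq (𝒞 : ℤ → Submodule R C) [DirectSum.Decomposition 𝒞]
    (𝓜 : ℤ → Submodule R M) [DirectSum.Decomposition 𝓜]
    (Δ : C →ₗ[R] C ⊗[R] C) (ΔM : M →ₗ[R] M ⊗[R] C) (μN : A ⊗[R] N →ₗ[R] N)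
    (τ : C →ₗ[R] A)
    (hcoassoc : (TensorProduct.assoc R M C C).toLinearMap ∘ₗ
        LinearMap.rTensor C ΔM ∘ₗ ΔM = LinearMap.lTensor M Δ ∘ₗ ΔM)
    (hdeg : ∀ n : ℤ, ∀ x ∈ 𝓜 n, ΔM x ∈ ⨆ p : ℤ, tmul' (𝓜 p) (𝒞 (n - p)))
    (hmul : ∀ (a b : A) (x : N), μN ((a * b) ⊗ₜ x) = μN (a ⊗ₜ μN (b ⊗ₜ x))) :
    cap 𝓜 ΔM μN (-1) τ ∘ₗ cap 𝓜 ΔM μN (-1) τ = cap0 ΔM μN (cup 𝒞 Δ (-1) τ τ) := by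
  refine ext_homog 𝓜 ?_
  intro i m hm n
  rw [LinearMap.comp_apply, cap_apply_tmul, cap0_apply_tmul]
  have key : ∀ z ∈ ⨆ p : ℤ, tmul' (𝓜 p) (𝒞 (i - p)),
      cap 𝓜 ΔM μN (-1) τ (capAux μN τ n (LinearMap.rTensor C (sgnOp 𝓜 (-1)) z))
        = Gmap μN τ (sgnOp 𝒞 (-1)) n (LinearMap.rTensor C ΔM z) := by
    refine tmul'_iSup_induction 𝓜 (fun p => 𝒞 (i - p))
      (P := fun z => cap 𝓜 ΔM μN (-1) τ
          (capAux μN τ n (LinearMap.rTensor C (sgnOp 𝓜 (-1)) z))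
        = Gmap μN τ (sgnOp 𝒞 (-1)) n (LinearMap.rTensor C ΔM z)) ?_ (by simp) ?_
    · intro p m₁ hm₁ c hc
      rw [LinearMap.rTensor_tmul, LinearMap.rTensor_tmul,
        sgnOp_apply 𝓜 (-1) p m₁ hm₁, sgn_neg_one_mul, ← TensorProduct.smul_tmul',
        map_zsmul, capAux_tmul, map_zsmul, cap_apply_tmul,
        sign_swap 𝓜 𝒞 p (hdeg p m₁ hm₁), map_zsmul, smul_smul, sgn_sq, one_smul]
      induction ΔM m₁ using TensorProduct.induction_on with
      | zero => simp
      | tmul m₂ c' => simp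
      | add u v hu hv =>
          simp only [map_add, TensorProduct.add_tmul, hu, hv]
    · intro x y hx hy
      simp only [map_add, hx, hy]
  rw [key (ΔM m) (hdeg i m hm)]
  have hco : (TensorProduct.assoc R M C C).toLinearMap
      (LinearMap.rTensor C ΔM (ΔM m)) = LinearMap.lTensor M Δ (ΔM m) := by
    have := LinearMap.ext_iff.mp hcoassoc m
    simpa using this
  have claimA : (capAux μN (cup 𝒞 Δ (-1) τ τ) n : M ⊗[R] C →ₗ[R] M ⊗[R] N)
      = Bmap μN τ (sgnOp 𝒞 (-1)) n ∘ₗ LinearMap.lTensor M Δ := by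
    apply TensorProduct.ext'
    intro m₁ c''
    rw [capAux_tmul, LinearMap.comp_apply, LinearMap.lTensor_tmul]
    have : cup 𝒞 Δ (-1) τ τ c''
        = (LinearMap.mul' R A ∘ₗ TensorProduct.map τ τ ∘ₗ
            LinearMap.rTensor C (sgnOp 𝒞 (-1))) (Δ c'') := rfl
    rw [this]
    induction Δ c'' using TensorProduct.induction_on with
    | zero => simp
    | tmul c' c => simp
    | add u v hu hv =>
        simp only [map_add, TensorProduct.add_tmul, TensorProduct.tmul_add, hu, hv]
  have claimB : (Gmap μN τ (sgnOp 𝒞 (-1)) n : (M ⊗[R] C) ⊗[R] C →ₗ[R] M ⊗[R] N)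
      = Bmap μN τ (sgnOp 𝒞 (-1)) n ∘ₗ (TensorProduct.assoc R M C C).toLinearMap := by
    apply TensorProduct.ext_threefold
    intro m₂ c' c
    rw [Gmap_tmul, LinearMap.comp_apply, LinearEquiv.coe_coe, TensorProduct.assoc_tmul,
      Bmap_tmul, hmul]
  rw [claimB, LinearMap.comp_apply, hco, claimA, LinearMap.comp_apply]

end Aux4

section Aux5
variable {R : Type} [CommRing R]
variable {C : Type} [AddCommGroup C] [Module R C]
variable {A : Type} [Ring A] [Algebra R A]
variable {M : Type} [AddCommGroup M] [Module R M]
variable {N : Type} [AddCommGroup N] [Module R N]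

set_option maxHeartbeats 1000000 in
lemma cap_anticomm (𝒞 : ℤ → Submodule R C) [DirectSum.Decomposition 𝒞]
    (𝒜 : ℤ → Submodule R A)
    (𝓜 : ℤ → Submodule R M) [DirectSum.Decomposition 𝓜]
    (ΔM : M →ₗ[R] M ⊗[R] C) (dM : M →ₗ[R] M) (dC : C →ₗ[R] C) (dA : A →ₗ[R] A)
    (dN : N →ₗ[R] N) (μN : A ⊗[R] N →ₗ[R] N) (τ : C →ₗ[R] A)
    (hdeg : ∀ n : ℤ, ∀ x ∈ 𝓜 n, ΔM x ∈ ⨆ p : ℤ, tmul' (𝓜 p) (𝒞 (n - p)))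
    (hchain : ΔM ∘ₗ dM = (LinearMap.rTensor C dM +
        LinearMap.lTensor M dC ∘ₗ LinearMap.rTensor C (sgnOp 𝓜 1)) ∘ₗ ΔM)
    (hMdeg : IsDeg 𝓜 𝓜 (-1) dM)
    (hτdeg : IsDeg 𝒞 𝒜 (-1) τ)
    (hNchain : ∀ i : ℤ, ∀ a ∈ 𝒜 i, ∀ x : N,
        dN (μN (a ⊗ₜ x)) = μN (dA a ⊗ₜ x) + sgn i • μN (a ⊗ₜ dN x)) :
    dTens 𝓜 dM dN ∘ₗ cap 𝓜 ΔM μN (-1) τ + cap 𝓜 ΔM μN (-1) τ ∘ₗ dTens 𝓜 dM dN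
      = cap0 ΔM μN (dA ∘ₗ τ + τ ∘ₗ dC) := by
  refine ext_homog 𝓜 ?_
  intro i m hm n
  simp only [LinearMap.add_apply, LinearMap.comp_apply]
  rw [dTens_tmul 𝓜 dM dN i m hm n, cap_apply_tmul, cap0_apply_tmul, map_add, map_zsmul,
    cap_apply_tmul, cap_apply_tmul]
  have hΔd : ΔM (dM m) = LinearMap.rTensor C dM (ΔM m) +
      LinearMap.lTensor M dC (LinearMap.rTensor C (sgnOp 𝓜 1) (ΔM m)) := by
    have h := LinearMap.ext_iff.mp hchain m
    simp only [LinearMap.comp_apply, LinearMap.add_apply] at h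
    exact h
  rw [hΔd]
  have key : ∀ z ∈ ⨆ p : ℤ, tmul' (𝓜 p) (𝒞 (i - p)),
      (dTens 𝓜 dM dN ∘ₗ capAux μN τ n ∘ₗ LinearMap.rTensor C (sgnOp 𝓜 (-1)) +
        (capAux μN τ n ∘ₗ LinearMap.rTensor C (sgnOp 𝓜 (-1)) ∘ₗ
            (LinearMap.rTensor C dM +
              LinearMap.lTensor M dC ∘ₗ LinearMap.rTensor C (sgnOp 𝓜 1)) +
          sgn i • (capAux μN τ (dN n) ∘ₗ LinearMap.rTensor C (sgnOp 𝓜 (-1))))) z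
        = capAux μN (dA ∘ₗ τ + τ ∘ₗ dC) n z := by
    refine tmul'_iSup_induction 𝓜 (fun p => 𝒞 (i - p)) ?_ (by simp) ?_
    · intro p m₁ hm₁ c hc
      have hs1 : sgn (-1 * (p + -1)) = -sgn p := by
        rw [sgn_neg_one_mul, show p + -1 = p - 1 by ring, sgn_sub_one]
      have hs2 : sgn (i - p + -1) = -(sgn i * sgn p) := by
        rw [show i - p + -1 = (i - p) - 1 by ring, sgn_sub_one]
        congr 1
        rw [sgn_mul_sgn]
        refine sgn_parity _ _ ?_
        rw [show i - p - (i + p) = 2 * (-p) by ring]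
        exact even_two_mul _
      simp only [LinearMap.add_apply, LinearMap.comp_apply, LinearMap.smul_apply]
      simp only [map_add, map_zsmul, LinearMap.rTensor_tmul, LinearMap.lTensor_tmul,
        sgnOp_apply 𝓜 (-1) p m₁ hm₁, sgnOp_apply 𝓜 1 p m₁ hm₁,
        sgnOp_apply 𝓜 (-1) (p + -1) (dM m₁) (hMdeg p m₁ hm₁),
        sgn_neg_one_mul, sgn_one_mul, hs1, ← TensorProduct.smul_tmul',
        capAux_tmul, dTens_tmul 𝓜 dM dN p m₁ hm₁,
        hNchain (i - p + -1) (τ c) (hτdeg (i - p) c hc) n, hs2,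
        LinearMap.add_apply, LinearMap.comp_apply]
      simp only [smul_add, smul_smul, sgn_sq, one_smul, neg_smul, neg_mul,
        TensorProduct.add_tmul, TensorProduct.tmul_add, map_add,
        TensorProduct.tmul_smul, neg_one_smul]
      have hfix : m₁ ⊗ₜ[R] (-((sgn i * sgn p) • μN (τ c ⊗ₜ[R] dN n)))
          = -((sgn i * sgn p) • (m₁ ⊗ₜ[R] μN (τ c ⊗ₜ[R] dN n))) := by
        rw [TensorProduct.tmul_neg, TensorProduct.tmul_smul]
      rw [hfix]
      abel
    · intro x y hx hy
      rw [map_add, map_add, hx, hy]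
  have h2 := key (ΔM m) (hdeg i m hm)
  simp only [LinearMap.add_apply, LinearMap.comp_apply, LinearMap.smul_apply] at h2
  exact h2

end Aux5

end HPT

open HPT in
/-- for a twisting cochain `τ : C → A`, the operator
`d_τ = d - (τ ∩ ·)` on `M ⊗ N` squares to zero, so `M ⊗_τ N` is a chain complex. -/
theorem statement3
    {R : Type} [CommRing R]
    {C : Type} [AddCommGroup C] [Module R C]
    (𝒞 : ℤ → Submodule R C) [DirectSum.Decomposition 𝒞]
    (Δ : C →ₗ[R] C ⊗[R] C) (εC : C →ₗ[R] R) (dC : C →ₗ[R] C) (e : C)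
    {A : Type} [Ring A] [Algebra R A]
    (𝒜 : ℤ → Submodule R A) [GradedAlgebra 𝒜] (dA : A →ₗ[R] A) (εA : A →ₐ[R] R)
    {M : Type} [AddCommGroup M] [Module R M]
    (𝓜 : ℤ → Submodule R M) [DirectSum.Decomposition 𝓜]
    (dM : M →ₗ[R] M) (ΔM : M →ₗ[R] M ⊗[R] C)
    {N : Type} [AddCommGroup N] [Module R N]
    (𝒩 : ℤ → Submodule R N) (dN : N →ₗ[R] N) (μN : A ⊗[R] N →ₗ[R] N)
    (hC : IsDGCoalg 𝒞 Δ εC dC) (hCe : IsCoaug Δ εC dC 𝒞 e)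
    (hA : IsDGAlg 𝒜 dA) (hAug : IsAug 𝒜 dA εA)
    (hM : IsDGComod 𝒞 Δ εC dC 𝓜 dM ΔM)
    (hN : IsDGModLeft 𝒜 dA 𝒩 dN μN)
    (τ : C →ₗ[R] A) (hτ : IsTwisting 𝒞 Δ εC dC e 𝒜 dA εA τ) :
    (dTens 𝓜 dM dN - cap 𝓜 ΔM μN (-1) τ) ∘ₗ (dTens 𝓜 dM dN - cap 𝓜 ΔM μN (-1) τ) = 0 := by
  have hD : dA ∘ₗ τ + τ ∘ₗ dC = cup 𝒞 Δ (-1) τ τ := by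
    have h := hτ.eq
    unfold DhGen at h
    rw [show sgn (-1) = -1 by decide, neg_one_smul, sub_neg_eq_add] at h
    exact h
  have hL1 := cap_anticomm 𝒞 𝒜 𝓜 ΔM dM dC dA dN μN τ hM.deg hM.chain hM.d_deg hτ.deg hN.chain
  have hL2 := cap_sq 𝒞 𝓜 Δ ΔM μN τ hM.coassoc hM.deg hN.mul_act
  have hL0 := dTens_sq 𝓜 dM dN hM.d_deg hM.d_sq hN.d_sq
  rw [← hD] at hL2
  set d := dTens 𝓜 dM dN
  set T := cap 𝓜 ΔM μN (-1) τ
  have expand : (d - T) ∘ₗ (d - T) = d ∘ₗ d - (d ∘ₗ T + T ∘ₗ d) + T ∘ₗ T := by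
    apply LinearMap.ext
    intro x
    simp only [LinearMap.sub_comp, LinearMap.comp_sub, LinearMap.sub_apply,
      LinearMap.add_apply, LinearMap.comp_apply]
    abel
  rw [expand, hL0, hL1, hL2]
  abel
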